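/- arXiv:0705.1107 — 2 statements merged into one kernel-verified Lean document; each statement's English description precedes it below -/
import Mathlib

section
/- Let V:ℝ³→ℝ be continuous, nonnegative, homogeneous of degree s>2 and satisfy V(x) − Ω²r²/4 → ∞ as |x|→∞, let g > 0, Ω > 0, and set γ = Ω^{−2(s+3)/(s−2)} g. Then the TF quantities obey the scaling relations: Ω^{−2s/(s−2)} E^TF_{g,Ω} = E^TF_{γ,1}, Ω^{−2s/(s−2)} μ^TF_{g,Ω} = μ^TF_{γ,1}, and Ω^{6/(s−2)} ρ^TF_{g,Ω}(Ω^{2/(s−2)} x) = ρ^TF_{γ,1}(x) for all x ∈ ℝ³. Moreover γ = ω^{−2(s+3)/(s−2)} where ω = g^{−(s−2)/(2s+6)} Ω. -/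
noncomputable section

open MeasureTheory Filter Topology Real

abbrev E3 := EuclideanSpace ℝ (Fin 3)

/-- distance from the z-axis -/
def radial (x : E3) : ℝ := Real.sqrt ((x 0)^2 + (x 1)^2)

/-- k-th component of the vector potential `A_Ω(x) = (Ω/2)(e_z ∧ x)` -/
def Avec (Ω : ℝ) (x : E3) : Fin 3 → ℝ := ![-(Ω/2) * x 1, (Ω/2) * x 0, 0]

/-- covariant (magnetic) derivative `(∂_k - i A_k) φ` -/
def covD (Ω : ℝ) (φ : E3 → ℂ) (k : Fin 3) : E3 → ℂ := fun x =>
  fderiv ℝ φ x (EuclideanSpace.single k 1) - Complex.I * (Avec Ω x k : ℂ) * φ x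

/-- `|(∇ - iA_Ω)φ|²` -/
def magKin (Ω : ℝ) (φ : E3 → ℂ) (x : E3) : ℝ := ∑ k : Fin 3, ‖covD Ω φ k x‖^2

/-- homogeneity of degree `s`: `V (λ x) = λ^s V x` for `λ > 0` -/
def HomogeneousOfDegree (V : E3 → ℝ) (s : ℝ) : Prop :=
  ∀ l : ℝ, 0 < l → ∀ x : E3, V (l • x) = l ^ s * V x

/-- trapping: `V - Ω² r²/4 → ∞` as `|x| → ∞`, for every `Ω ≥ 0` -/
def IsTrapping (V : E3 → ℝ) : Prop :=
  ∀ Ω : ℝ, 0 ≤ Ω →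
    Tendsto (fun x : E3 => V x - Ω^2 * (radial x)^2 / 4) (cocompact E3) atTop

/-- Thomas-Fermi functional -/
def TFtot (V : E3 → ℝ) (g Ω : ℝ) (ρ : E3 → ℝ) : ℝ :=
  ∫ x : E3, (V x * ρ x - Ω^2 * (radial x)^2 / 4 * ρ x + g * (ρ x)^2)

/-- admissible (normalized) TF densities -/
def TFadm (V : E3 → ℝ) (ρ : E3 → ℝ) : Prop :=
  (∀ x, 0 ≤ ρ x) ∧ MemLp ρ 2 volume ∧
    Integrable (fun x => V x * ρ x) ∧
    Integrable (fun x => (radial x)^2 * ρ x) ∧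
    (∫ x : E3, ρ x) = 1

/-- Thomas-Fermi ground state energy `E^TF_{g,Ω}` -/
def TFenergy (V : E3 → ℝ) (g Ω : ℝ) : ℝ :=
  sInf {e : ℝ | ∃ ρ : E3 → ℝ, TFadm V ρ ∧ TFtot V g Ω ρ = e}

def IsTFMinimizer (V : E3 → ℝ) (g Ω : ℝ) (ρ : E3 → ℝ) : Prop :=
  TFadm V ρ ∧ TFtot V g Ω ρ = TFenergy V g Ω

/-- the `L^∞` (essential supremum) norm -/
def supNorm (ρ : E3 → ℝ) : ℝ := (eLpNorm ρ ⊤ volume).toReal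

/-- Gross-Pitaevskii functional -/
def GPtot (V : E3 → ℝ) (g Ω : ℝ) (φ : E3 → ℂ) : ℝ :=
  ∫ x : E3, (magKin Ω φ x + V x * ‖φ x‖^2 - Ω^2 * (radial x)^2 / 4 * ‖φ x‖^2 + g * ‖φ x‖^4)

/-- admissible (normalized) GP states -/
def GPadm (V : E3 → ℝ) (Ω : ℝ) (φ : E3 → ℂ) : Prop :=
  Differentiable ℝ φ ∧ MemLp φ 4 volume ∧
    Integrable (fun x => V x * ‖φ x‖^2) ∧
    Integrable (fun x => (radial x)^2 * ‖φ x‖^2) ∧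
    Integrable (fun x => magKin Ω φ x) ∧
    (∫ x : E3, ‖φ x‖^2) = 1

/-- Gross-Pitaevskii ground state energy `E^GP_{g,Ω}` -/
def GPenergy (V : E3 → ℝ) (g Ω : ℝ) : ℝ :=
  sInf {e : ℝ | ∃ φ : E3 → ℂ, GPadm V Ω φ ∧ GPtot V g Ω φ = e}

/-- sum of the pair interactions `Σ_{i<j} v(|x_i - x_j|)` -/
def pairSum (v : ℝ → ℝ) {N : ℕ} (X : Fin N → E3) : ℝ :=
  ∑ i : Fin N, ∑ j : Fin N, if i < j then v (dist (X i) (X j)) else 0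

/-- many-body magnetic kinetic energy density `Σ_j |(∇_j - iA_Ω(x_j))Ψ|²` -/
def qmKin (Ω : ℝ) {N : ℕ} (Ψ : (Fin N → E3) → ℂ) (X : Fin N → E3) : ℝ :=
  ∑ j : Fin N, ∑ k : Fin 3,
    ‖fderiv ℝ Ψ X (Pi.single j (EuclideanSpace.single k 1))
      - Complex.I * (Avec Ω (X j) k : ℂ) * Ψ X‖^2

/-- integrand of the many-body quadratic form `⟨Ψ, H_N Ψ⟩` -/
def qmDensity (V : E3 → ℝ) (v : ℝ → ℝ) (Ω : ℝ) {N : ℕ}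
    (Ψ : (Fin N → E3) → ℂ) (X : Fin N → E3) : ℝ :=
  qmKin Ω Ψ X
    + ((∑ j : Fin N, (V (X j) - Ω^2 * (radial (X j))^2 / 4)) + pairSum v X) * ‖Ψ X‖^2

/-- admissible (symmetric, normalized, regular) many-body wave functions -/
def QMadm (N : ℕ) (Ψ : (Fin N → E3) → ℂ) : Prop :=
  (∀ σ : Equiv.Perm (Fin N), ∀ X : Fin N → E3, Ψ (X ∘ σ) = Ψ X) ∧
    Differentiable ℝ Ψ ∧ MemLp Ψ 2 volume ∧
    (∫ X : Fin N → E3, ‖Ψ X‖^2) = 1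

/-- many-body ground state energy `E^QM_{g,Ω}(N)`: infimum of the quadratic form of `H_N`
over normalized symmetric states in the form domain -/
def QMenergy (V : E3 → ℝ) (v : ℝ → ℝ) (Ω : ℝ) (N : ℕ) : ℝ :=
  sInf {e : ℝ | ∃ Ψ : (Fin N → E3) → ℂ, QMadm N Ψ ∧
    Integrable (qmDensity V v Ω Ψ) ∧ (∫ X : Fin N → E3, qmDensity V v Ω Ψ X) = e}

/-- `w` has scattering length `a` -/
def HasScatteringLength (w : ℝ → ℝ) (a : ℝ) : Prop :=
  ∃ u : ℝ → ℝ, u 0 = 0 ∧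
    (∀ r : ℝ, 0 < r → DifferentiableAt ℝ u r) ∧
    (∀ r : ℝ, 0 < r → HasDerivAt (deriv u) (w r * u r / 2) r) ∧
    Tendsto (deriv u) atTop (nhds 1) ∧
    Tendsto (fun r => r - u r) atTop (nhds a)

def HasFiniteRange (w : ℝ → ℝ) : Prop := ∃ R : ℝ, 0 < R ∧ ∀ r : ℝ, R ≤ r → w r = 0

/-- the scaled interaction `v(r) = a⁻² v₁(r/a)` (with scattering length `a`) -/
def scaledInteraction (v₁ : ℝ → ℝ) (a : ℝ) : ℝ → ℝ := fun r => (a^2)⁻¹ * v₁ (r / a)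

/-- normalized one-particle density of a many-body wave function -/
def oneDensity (N : ℕ) (Ψ : (Fin N → E3) → ℂ) (x : E3) : ℝ :=
  ∫ Y : {i : Fin N // i.val ≠ 0} → E3,
    ‖Ψ (fun i => if h : i.val = 0 then x else Y ⟨i, h⟩)‖^2

open Pointwise

lemma radial_smul (l : ℝ) (hl : 0 ≤ l) (x : E3) : radial (l • x) = l * radial x := by
  have h0 : (l • x) 0 = l * x 0 := rfl
  have h1 : (l • x) 1 = l * x 1 := rfl
  unfold radial
  rw [h0, h1, show (l * x 0)^2 + (l * x 1)^2 = l^2 * ((x 0)^2 + (x 1)^2) by ring,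
    Real.sqrt_mul (sq_nonneg l), Real.sqrt_sq hl]

lemma finrank_E3 : Module.finrank ℝ E3 = 3 := finrank_euclideanSpace_fin

lemma TF_scale (V : E3 → ℝ) (s : ℝ) (hV_hom : HomogeneousOfDegree V s)
    (l : ℝ) (hl : 0 < l) (G W g Ω : ℝ)
    (hG : G * l ^ (s + 3) = g) (hW : l ^ (s - 2) * W ^ 2 = Ω ^ 2)
    (ρ : E3 → ℝ) (hρ : TFadm V ρ) :
    TFadm V (fun x => l ^ 3 * ρ (l • x)) ∧
      TFtot V G W (fun x => l ^ 3 * ρ (l • x)) = (l ^ s)⁻¹ * TFtot V g Ω ρ := by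
  obtain ⟨h0, h2, hVρ, hrρ, h1⟩ := hρ
  have hl' : l ≠ 0 := hl.ne'
  have hA : (0:ℝ) < l ^ s := Real.rpow_pos_of_pos hl s
  have hs3 : l ^ (s + 3) = l ^ s * l ^ 3 := by
    rw [Real.rpow_add hl, show (3:ℝ) = ((3:ℕ):ℝ) by norm_num, Real.rpow_natCast]
  have hs2 : l ^ (s - 2) = l ^ s / l ^ 2 := by
    rw [Real.rpow_sub hl, show (2:ℝ) = ((2:ℕ):ℝ) by norm_num, Real.rpow_natCast]
  have hVs : ∀ y : E3, V (l • y) = l ^ s * V y := hV_hom l hl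
  have hrs : ∀ y : E3, radial (l • y) = l * radial y := radial_smul l hl.le
  have qmp : MeasureTheory.Measure.QuasiMeasurePreserving (fun x : E3 => l • x) volume volume :=
    MeasureTheory.Measure.quasiMeasurePreserving_smul volume hl'
  have hmρ : AEStronglyMeasurable ρ volume := h2.aestronglyMeasurable
  have hmτ : AEStronglyMeasurable (fun x : E3 => l ^ 3 * ρ (l • x)) volume :=
    (hmρ.comp_quasiMeasurePreserving qmp).const_mul _
  have hsqρ : Integrable (fun x : E3 => (ρ x)^2) := (memLp_two_iff_integrable_sq hmρ).1 h2
  have hsqτ : Integrable (fun x : E3 => (l ^ 3 * ρ (l • x))^2) := by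
    refine ((hsqρ.comp_smul hl').const_mul ((l^3)^2)).congr
      (Eventually.of_forall fun x => ?_)
    ring
  have hVτ : Integrable (fun x : E3 => V x * (l ^ 3 * ρ (l • x))) := by
    refine ((hVρ.comp_smul hl').const_mul (l^3 * (l ^ s)⁻¹)).congr
      (Eventually.of_forall fun x => ?_)
    simp only
    rw [hVs x]
    field_simp
  have hrτ : Integrable (fun x : E3 => (radial x)^2 * (l ^ 3 * ρ (l • x))) := by
    refine ((hrρ.comp_smul hl').const_mul l).congr (Eventually.of_forall fun x => ?_)
    simp only
    rw [hrs x]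
    ring
  have hint : (∫ x : E3, l ^ 3 * ρ (l • x)) = 1 := by
    rw [integral_const_mul, MeasureTheory.Measure.integral_comp_smul volume ρ l, finrank_E3,
      h1, smul_eq_mul, mul_one, abs_of_nonneg (by positivity)]
    field_simp
  refine ⟨⟨fun x => mul_nonneg (by positivity) (h0 _), (memLp_two_iff_integrable_sq hmτ).2 hsqτ,
    hVτ, hrτ, hint⟩, ?_⟩
  have hpt : ∀ x : E3,
      V x * (l ^ 3 * ρ (l • x)) - W^2 * (radial x)^2 / 4 * (l ^ 3 * ρ (l • x))
        + G * (l ^ 3 * ρ (l • x))^2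
      = ((l ^ s)⁻¹ * l ^ 3) *
        (V (l • x) * ρ (l • x) - Ω^2 * (radial (l • x))^2 / 4 * ρ (l • x) + g * (ρ (l • x))^2) := by
    intro x
    rw [hVs x, hrs x, ← hG, ← hW, hs3, hs2]
    field_simp
  unfold TFtot
  rw [integral_congr_ae (Eventually.of_forall hpt), integral_const_mul,
    MeasureTheory.Measure.integral_comp_smul volume
      (fun y => V y * ρ y - Ω^2 * (radial y)^2 / 4 * ρ y + g * (ρ y)^2) l,
    finrank_E3, smul_eq_mul, abs_of_nonneg (by positivity : (0:ℝ) ≤ ((l^3)⁻¹ : ℝ))]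
  field_simp
  congr 1; ext x; ring

lemma chem_lt_false (c : ℝ) (hc : 0 < c) (h : E3 → ℝ) (t₁ t₂ : ℝ) (hlt : t₁ < t₂)
    (H1 : (∫ x : E3, c * max (t₁ + h x) 0) = 1)
    (H2 : (∫ x : E3, c * max (t₂ + h x) 0) = 1) : False := by
  have hi1 : Integrable (fun x : E3 => c * max (t₁ + h x) 0) := by
    by_contra hni; rw [integral_undef hni] at H1; norm_num at H1
  have hi2 : Integrable (fun x : E3 => c * max (t₂ + h x) 0) := by
    by_contra hni; rw [integral_undef hni] at H2; norm_num at H2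
  have hsub0 : (∫ x : E3, (c * max (t₂ + h x) 0 - c * max (t₁ + h x) 0)) = 0 := by
    rw [integral_sub hi2 hi1, H1, H2]; ring
  have hnn : ∀ x : E3, 0 ≤ c * max (t₂ + h x) 0 - c * max (t₁ + h x) 0 := by
    intro x
    have hmm : max (t₁ + h x) 0 ≤ max (t₂ + h x) 0 := max_le_max (by linarith) le_rfl
    nlinarith
  have hae := (integral_eq_zero_iff_of_nonneg_ae (Eventually.of_forall hnn) (hi2.sub hi1)).1 hsub0
  have hz : (fun x : E3 => c * max (t₂ + h x) 0) =ᵐ[volume] (fun _ => (0:ℝ)) := by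
    filter_upwards [hae] with x hx
    simp only [Pi.zero_apply] at hx ⊢
    by_contra hne
    have hmne : max (t₂ + h x) 0 ≠ 0 := fun e => hne (by rw [e, mul_zero])
    have hpos : 0 < max (t₂ + h x) 0 := (le_max_right _ _).lt_of_ne (Ne.symm hmne)
    have ht2 : 0 < t₂ + h x := by
      by_contra hle
      push_neg at hle
      rw [max_eq_right hle] at hpos
      exact lt_irrefl _ hpos
    have hm2 : max (t₂ + h x) 0 = t₂ + h x := max_eq_left ht2.le
    have hm1 : max (t₁ + h x) 0 < t₂ + h x := max_lt (by linarith) ht2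
    have : c * max (t₁ + h x) 0 < c * max (t₂ + h x) 0 := by
      rw [hm2]; exact (mul_lt_mul_iff_right₀ hc).2 hm1
    linarith
  have h0 : (∫ x : E3, c * max (t₂ + h x) 0) = 0 := by
    rw [integral_congr_ae hz, integral_zero]
  rw [H2] at h0; norm_num at h0

lemma chem_unique (c : ℝ) (hc : 0 < c) (h : E3 → ℝ) {t₁ t₂ : ℝ}
    (H1 : (∫ x : E3, c * max (t₁ + h x) 0) = 1)
    (H2 : (∫ x : E3, c * max (t₂ + h x) 0) = 1) : t₁ = t₂ := by
  rcases lt_trichotomy t₁ t₂ with hlt | he | hlt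
  · exact (chem_lt_false c hc h t₁ t₂ hlt H1 H2).elim
  · exact he
  · exact (chem_lt_false c hc h t₂ t₁ hlt H2 H1).elim

/-- **Eqs. (2.17)-(2.19)** (TF scaling relations for strong rotation): with
`γ = Ω^{-2(s+3)/(s-2)} g`, one has `Ω^{-2s/(s-2)} E^TF_{g,Ω} = E^TF_{γ,1}`,
`Ω^{-2s/(s-2)} μ^TF_{g,Ω} = μ^TF_{γ,1}`,
`Ω^{6/(s-2)} ρ^TF_{g,Ω}(Ω^{2/(s-2)} x) = ρ^TF_{γ,1}(x)`, and moreover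
`γ = ω^{-2(s+3)/(s-2)}` where `ω = g^{-(s-2)/(2s+6)} Ω`. -/
theorem tf_scaling_strong_rotation
    (V : E3 → ℝ) (s : ℝ)
    (hV_cont : Continuous V) (hV_nonneg : ∀ x, 0 ≤ V x)
    (hs : 2 < s) (hV_hom : HomogeneousOfDegree V s) (hV_trap : IsTrapping V)
    (g Ω : ℝ) (hg : 0 < g) (hΩ : 0 < Ω)
    (μ μγ : ℝ)
    -- `μ` is the chemical potential for `(g, Ω)`:
    (hμ : (∫ x : E3, (2*g)⁻¹ * max (μ + Ω^2 * (radial x)^2/4 - V x) 0) = 1)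
    -- `μγ` is the chemical potential for `(γ, 1)` with `γ = Ω^{-2(s+3)/(s-2)} g`:
    (hμγ : (∫ x : E3, (2 * (Ω ^ (-(2 * (s + 3)) / (s - 2)) * g))⁻¹ *
      max (μγ + (radial x)^2/4 - V x) 0) = 1) :
    Ω ^ (-(2 * s / (s - 2))) * TFenergy V g Ω =
        TFenergy V (Ω ^ (-(2 * (s + 3)) / (s - 2)) * g) 1 ∧
      Ω ^ (-(2 * s / (s - 2))) * μ = μγ ∧
      (∀ x : E3,
        Ω ^ ((6 : ℝ) / (s - 2)) *
          ((2*g)⁻¹ * max (μ + Ω^2 * (radial (Ω ^ ((2 : ℝ) / (s - 2)) • x))^2/4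
            - V (Ω ^ ((2 : ℝ) / (s - 2)) • x)) 0) =
        (2 * (Ω ^ (-(2 * (s + 3)) / (s - 2)) * g))⁻¹ *
          max (μγ + (radial x)^2/4 - V x) 0) ∧
      Ω ^ (-(2 * (s + 3)) / (s - 2)) * g =
        (g ^ (-((s - 2) / (2 * s + 6))) * Ω) ^ (-(2 * (s + 3)) / (s - 2)) := by
  have hs2ne : s - 2 ≠ 0 := ne_of_gt (by linarith)
  set l : ℝ := Ω ^ ((2:ℝ)/(s-2)) with hldef
  have hl : 0 < l := Real.rpow_pos_of_pos hΩ _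
  have hA : (0:ℝ) < l ^ s := Real.rpow_pos_of_pos hl s
  have hAs : l ^ s = Ω ^ (2*s/(s-2)) := by
    rw [hldef, ← Real.rpow_mul hΩ.le]; congr 1; ring
  have hneg : Ω ^ (-(2*s/(s-2))) = (l ^ s)⁻¹ := by
    rw [Real.rpow_neg hΩ.le, hAs]
  have hW2 : l ^ (s-2) = Ω ^ 2 := by
    rw [hldef, ← Real.rpow_mul hΩ.le, show (2:ℝ)/(s-2)*(s-2) = ((2:ℕ):ℝ) by field_simp; norm_num,
      Real.rpow_natCast]
  have hγl : Ω ^ (-(2 * (s + 3)) / (s - 2)) = l ^ (-(s+3)) := by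
    rw [hldef, ← Real.rpow_mul hΩ.le]; congr 1; ring
  have hl3 : Ω ^ ((6:ℝ)/(s-2)) = l ^ 3 := by
    rw [hldef, ← Real.rpow_natCast (Ω ^ ((2:ℝ)/(s-2))) 3, ← Real.rpow_mul hΩ.le]
    congr 1; push_cast; ring
  have hs3 : l ^ (s + 3) = l ^ s * l ^ 3 := by
    rw [Real.rpow_add hl, show (3:ℝ) = ((3:ℕ):ℝ) by norm_num, Real.rpow_natCast]
  have hsub2 : l ^ (s - 2) = l ^ s / l ^ 2 := by
    rw [Real.rpow_sub hl, show (2:ℝ) = ((2:ℕ):ℝ) by norm_num, Real.rpow_natCast]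
  set γ : ℝ := Ω ^ (-(2 * (s + 3)) / (s - 2)) * g with hγdef
  have hγpos : 0 < γ := mul_pos (Real.rpow_pos_of_pos hΩ _) hg
  have hγinv : γ = l ^ (-(s+3)) * g := by rw [hγdef, hγl]
  have hγls : γ * l ^ (s+3) = g := by
    rw [hγinv, Real.rpow_neg hl.le]
    field_simp
  have hγls' : g * (l⁻¹) ^ (s+3) = γ := by
    rw [Real.inv_rpow hl.le, hγinv, Real.rpow_neg hl.le]; ring
  have hWl' : (l⁻¹) ^ (s-2) * Ω^2 = 1^2 := by
    rw [Real.inv_rpow hl.le, hW2]; field_simp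
  have hWl : l ^ (s-2) * 1^2 = Ω^2 := by rw [hW2]; ring
  have hinvs : ((l⁻¹) ^ s)⁻¹ = l ^ s := by rw [Real.inv_rpow hl.le, inv_inv]
  -- the chemical-potential scaling
  set G₀ : E3 → ℝ := fun x => (2*g)⁻¹ * max (μ + Ω^2 * (radial x)^2/4 - V x) 0 with hG₀def
  set μ' : ℝ := (l ^ s)⁻¹ * μ with hμ'def
  have hcγ : (2*γ)⁻¹ = (2*g)⁻¹ * l^(s+3) := by
    rw [hγinv, Real.rpow_neg hl.le]
    have : (0:ℝ) < l ^ (s+3) := Real.rpow_pos_of_pos hl _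
    field_simp
  have hpte : ∀ y : E3, (2*γ)⁻¹ * max (μ' + (radial y)^2/4 - V y) 0 = l^3 * G₀ (l • y) := by
    intro y
    rw [hG₀def]
    simp only
    rw [radial_smul l hl.le, hV_hom l hl, ← hW2, hsub2]
    have harg : μ + l ^ s / l ^ 2 * (l * radial y)^2/4 - l ^ s * V y
        = l ^ s * (μ' + (radial y)^2/4 - V y) := by
      rw [hμ'def]; field_simp
    rw [harg]
    have hmx : l ^ s * max (μ' + (radial y)^2/4 - V y) 0
        = max (l ^ s * (μ' + (radial y)^2/4 - V y)) 0 := by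
      rw [mul_max_of_nonneg _ _ hA.le, mul_zero]
    rw [← hmx, hcγ, hs3]
    ring
  have Hμ' : (∫ y : E3, (2*γ)⁻¹ * max (μ' + (radial y)^2/4 - V y) 0) = 1 := by
    simp only [hpte]
    rw [integral_const_mul, MeasureTheory.Measure.integral_comp_smul volume G₀ l, finrank_E3,
      hμ, smul_eq_mul, mul_one, abs_of_nonneg (by positivity)]
    field_simp
  have hμeq : μ' = μγ := by
    have H1 := Hμ'
    have H2 := hμγ
    simp only [add_sub_assoc] at H1 H2
    exact chem_unique (2*γ)⁻¹ (by positivity) (fun x => (radial x)^2/4 - V x) H1 H2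
  refine ⟨?_, ?_, ?_, ?_⟩
  · -- energy scaling
    rw [hneg]
    unfold TFenergy
    have hset : {e : ℝ | ∃ ρ, TFadm V ρ ∧ TFtot V γ 1 ρ = e}
        = (l ^ s)⁻¹ • {e : ℝ | ∃ ρ, TFadm V ρ ∧ TFtot V g Ω ρ = e} := by
      ext e
      constructor
      · rintro ⟨ρ', hadm, hE⟩
        obtain ⟨hadm2, hE2⟩ := TF_scale V s hV_hom l⁻¹ (inv_pos.2 hl) g Ω γ 1 hγls' hWl' ρ' hadm
        rw [hinvs] at hE2
        refine Set.mem_smul_set.2 ⟨l ^ s * e, ⟨_, hadm2, by rw [hE2, hE]⟩, ?_⟩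
        rw [smul_eq_mul]
        field_simp
      · intro he
        obtain ⟨y, ⟨ρ, hadm, hE⟩, hxy⟩ := Set.mem_smul_set.1 he
        obtain ⟨hadm2, hE2⟩ := TF_scale V s hV_hom l hl γ 1 g Ω hγls hWl ρ hadm
        exact ⟨_, hadm2, by rw [hE2, hE, ← hxy, smul_eq_mul]⟩
    rw [hset, Real.sInf_smul_of_nonneg (by positivity), smul_eq_mul]
  · rw [hneg]
    rw [hμ'def] at hμeq
    exact hμeq
  · intro x
    rw [hl3, ← hμeq]
    have h := hpte x
    rw [hG₀def] at h
    simp only at h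
    exact h.symm
  · rw [hγdef, Real.mul_rpow (Real.rpow_nonneg hg.le _) hΩ.le, ← Real.rpow_mul hg.le]
    have hab : -((s - 2) / (2 * s + 6)) * (-(2 * (s + 3)) / (s - 2)) = 1 := by
      have h2 : 2 * s + 6 ≠ 0 := ne_of_gt (by linarith)
      field_simp
      ring
    rw [hab, Real.rpow_one]
    ring
end
end

section
/- Let V:ℝ³→ℝ be continuous, nonnegative, homogeneous of degree s>2 and satisfy V(x) − Ω²r²/4 → ∞ as |x|→∞ for every Ω≥0. Then the function ω ↦ E^TF_{1,ω} is decreasing on [0,∞), E^TF_{1,0} > 0, the range of ω ↦ E^TF_{1,ω} is (−∞, E^TF_{1,0}] (in particular E^TF_{1,ω} → −∞ as ω → ∞), and there exists ω* > 0 with E^TF_{1,ω*} = 0. -/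
noncomputable section

open MeasureTheory Filter Topology Real

/-! ### Auxiliary lemmas -/

lemma radial_cont : Continuous radial := by unfold radial; fun_prop

lemma radial_sq (x : E3) : (radial x)^2 = (x 0)^2 + (x 1)^2 := by
  unfold radial; rw [Real.sq_sqrt (by positivity)]

lemma coord_le_norm (y : E3) (i : Fin 3) : |y i| ≤ ‖y‖ := by
  rw [EuclideanSpace.norm_eq, ← Real.sqrt_sq_eq_abs]
  apply Real.sqrt_le_sqrt
  have h : (y i)^2 = ‖y i‖^2 := by simp [Real.norm_eq_abs, sq_abs]
  rw [h]
  exact Finset.single_le_sum (f := fun j => ‖y j‖^2) (fun j _ => by positivity)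
    (Finset.mem_univ i)

def B1 : Set E3 := Metric.closedBall 0 1

lemma vB_pos : 0 < (volume B1).toReal := by
  rw [ENNReal.toReal_pos_iff]
  exact ⟨Metric.measure_closedBall_pos volume 0 one_pos, measure_closedBall_lt_top⟩

def vB : ℝ := (volume B1).toReal

def rho0 : E3 → ℝ := fun x => B1.indicator (fun _ => vB⁻¹) x

lemma rho0_nonneg : ∀ x, 0 ≤ rho0 x := fun x =>
  Set.indicator_nonneg (fun _ _ => inv_nonneg.mpr vB_pos.le) x

lemma B1_meas : MeasurableSet B1 := measurableSet_closedBall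

lemma rho0_int : (∫ x : E3, rho0 x) = 1 := by
  unfold rho0
  rw [integral_indicator B1_meas, setIntegral_const, smul_eq_mul]
  exact mul_inv_cancel₀ vB_pos.ne'

lemma rho0_memℒp : MemLp rho0 2 volume := by
  unfold rho0
  exact memLp_indicator_const 2 B1_meas _ (Or.inr measure_closedBall_lt_top.ne)

lemma int_mul_rho0 (f : E3 → ℝ) (hf : Continuous f) :
    Integrable (fun x => f x * rho0 x) := by
  have h : (fun x => f x * rho0 x) = B1.indicator (fun x => f x * vB⁻¹) := by
    ext x; unfold rho0
    by_cases hx : x ∈ B1 <;> simp [Set.indicator_of_mem, Set.indicator_of_notMem, hx]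
  rw [h, integrable_indicator_iff B1_meas]
  exact (hf.mul continuous_const).continuousOn.integrableOn_compact (isCompact_closedBall 0 1)

lemma adm_rho0 (V : E3 → ℝ) (hV_cont : Continuous V) : TFadm V rho0 :=
  ⟨rho0_nonneg, rho0_memℒp, int_mul_rho0 V hV_cont,
    int_mul_rho0 _ (by have := radial_cont; fun_prop), rho0_int⟩

lemma rsq_rho0_pos : 0 < ∫ x : E3, (radial x)^2 * rho0 x := by
  have hint : Integrable (fun x => (radial x)^2 * rho0 x) :=
    int_mul_rho0 _ (by have := radial_cont; fun_prop)
  set p : E3 := EuclideanSpace.single 0 (1/2 : ℝ) with hp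
  set B' : Set E3 := Metric.closedBall p (1/4) with hB'
  have hsub : B' ⊆ B1 := by
    intro x hx
    rw [hB', Metric.mem_closedBall] at hx
    simp only [B1, Metric.mem_closedBall]
    calc dist x 0 ≤ dist x p + dist p 0 := dist_triangle _ _ _
      _ ≤ 1/4 + 1/2 := by
          gcongr
          rw [dist_zero_right, hp, EuclideanSpace.norm_single]
          norm_num
      _ ≤ 1 := by norm_num
  have hlow : ∀ x ∈ B', (1/16 : ℝ) * vB⁻¹ ≤ (radial x)^2 * rho0 x := by
    intro x hx
    have hx0 : (1/4 : ℝ) ≤ x 0 := by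
      rw [hB', Metric.mem_closedBall] at hx
      have h1 : |x 0 - 1/2| ≤ 1/4 := by
        have h2 := coord_le_norm (x - p) 0
        rw [← dist_eq_norm] at h2
        have hxp : (x - p) 0 = x 0 - 1/2 := by
          simp [hp, PiLp.sub_apply, EuclideanSpace.single_apply]
        rw [hxp] at h2
        linarith
      linarith [(abs_le.mp h1).1]
    have hr : (1/16 : ℝ) ≤ (radial x)^2 := by rw [radial_sq]; nlinarith
    have hmem : x ∈ B1 := hsub hx
    have h3 : rho0 x = vB⁻¹ := by unfold rho0; rw [Set.indicator_of_mem hmem]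
    rw [h3]
    have := inv_pos.mpr vB_pos
    gcongr
  have hB'meas : MeasurableSet B' := measurableSet_closedBall
  have hB'pos : 0 < (volume B').toReal := by
    rw [ENNReal.toReal_pos_iff]
    exact ⟨Metric.measure_closedBall_pos volume p (by norm_num), measure_closedBall_lt_top⟩
  calc (0:ℝ) < (1/16 * vB⁻¹) * (volume B').toReal := by
        have := inv_pos.mpr vB_pos; positivity
    _ = ∫ _x in B', (1/16 : ℝ) * vB⁻¹ := by rw [setIntegral_const, smul_eq_mul, mul_comm]; rfl
    _ ≤ ∫ x in B', (radial x)^2 * rho0 x :=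
        setIntegral_mono_on ((integrableOn_const_iff).mpr (Or.inr measure_closedBall_lt_top))
          hint.integrableOn hB'meas hlow
    _ ≤ ∫ x : E3, (radial x)^2 * rho0 x := by
        apply setIntegral_le_integral hint
        filter_upwards with x
        exact mul_nonneg (sq_nonneg _) (rho0_nonneg x)

/-! ### Basic facts about admissible densities -/

lemma TFadm.integrable {V : E3 → ℝ} {ρ : E3 → ℝ} (h : TFadm V ρ) : Integrable ρ := by
  by_contra hc
  have := h.2.2.2.2
  rw [integral_undef hc] at this
  norm_num at this

lemma TFadm.integrable_sq' {V : E3 → ℝ} {ρ : E3 → ℝ} (h : TFadm V ρ) :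
    Integrable (fun x => (ρ x)^2) := by
  have := h.2.1.integrable_sq
  simpa using this

lemma TFadm.Qnonneg {V : E3 → ℝ} {ρ : E3 → ℝ} (_h : TFadm V ρ) :
    0 ≤ ∫ x : E3, (ρ x)^2 := integral_nonneg (fun x => sq_nonneg _)

lemma TFadm.Rnonneg {V : E3 → ℝ} {ρ : E3 → ℝ} (h : TFadm V ρ) :
    0 ≤ ∫ x : E3, (radial x)^2 * ρ x :=
  integral_nonneg (fun x => mul_nonneg (sq_nonneg _) (h.1 x))

/-- splitting the TF functional into its three integrals -/
lemma TF_split (V : E3 → ℝ) (ω : ℝ) {ρ : E3 → ℝ} (h : TFadm V ρ) :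
    TFtot V 1 ω ρ = (∫ x : E3, V x * ρ x) - ω^2/4 * (∫ x : E3, (radial x)^2 * ρ x)
      + ∫ x : E3, (ρ x)^2 := by
  have h1 : Integrable (fun x => V x * ρ x) := h.2.2.1
  have h2 : Integrable (fun x => ω^2 * (radial x)^2 / 4 * ρ x) := by
    have := h.2.2.2.1.const_mul (ω^2/4)
    apply this.congr
    filter_upwards with x
    ring
  have h3 : Integrable (fun x => (ρ x)^2) := h.integrable_sq'
  unfold TFtot
  rw [show (fun x : E3 => V x * ρ x - ω^2 * (radial x)^2 / 4 * ρ x + 1 * (ρ x)^2)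
      = fun x : E3 => (V x * ρ x - ω^2 * (radial x)^2 / 4 * ρ x) + (ρ x)^2 by
    funext x; ring]
  have h12 : Integrable (fun x => V x * ρ x - ω^2 * (radial x)^2 / 4 * ρ x) := h1.sub h2
  rw [integral_add h12 h3, integral_sub h1 h2]
  congr 1
  congr 1
  rw [show (fun x : E3 => ω^2 * (radial x)^2 / 4 * ρ x)
      = fun x : E3 => ω^2/4 * ((radial x)^2 * ρ x) by funext x; ring]
  exact integral_const_mul _ _

/-! ### Lower bounds from trapping -/

lemma trap_bound (V : E3 → ℝ) (hV_cont : Continuous V) {Ω : ℝ} (hΩ : 0 ≤ Ω)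
    (hV_trap : IsTrapping V) :
    ∃ C : ℝ, 0 ≤ C ∧ ∀ x, -C ≤ V x - Ω^2 * (radial x)^2 / 4 := by
  have h := hV_trap Ω hΩ
  have h0 : ∀ᶠ x in cocompact E3, (0:ℝ) ≤ V x - Ω^2 * (radial x)^2 / 4 :=
    h.eventually_ge_atTop 0
  rw [Filter.Eventually, mem_cocompact] at h0
  obtain ⟨K, hK, hKs⟩ := h0
  have hcont : Continuous (fun x : E3 => V x - Ω^2 * (radial x)^2 / 4) := by
    have := radial_cont; fun_prop
  obtain ⟨C, hC⟩ := hK.exists_bound_of_continuousOn hcont.continuousOn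
  refine ⟨max C 0, le_max_right _ _, fun x => ?_⟩
  by_cases hx : x ∈ K
  · calc -(max C 0) ≤ -C := by simp [neg_le, le_max_left]
      _ ≤ V x - Ω^2 * (radial x)^2 / 4 :=
        neg_le_of_abs_le (by simpa [abs_sub_comm] using hC x hx)
  · have h2 := hKs hx
    simp only [Set.mem_setOf_eq] at h2
    linarith [neg_nonpos_of_nonneg (le_max_right C 0)]

/-- main lower bound on the TF functional -/
lemma TF_lower (V : E3 → ℝ) {ρ : E3 → ℝ} (h : TFadm V ρ) {ω Ω C : ℝ}
    (hωΩ : ω^2 ≤ Ω^2) (hC : ∀ x, -C ≤ V x - Ω^2 * (radial x)^2 / 4) :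
    -C + (Ω^2 - ω^2)/4 * (∫ x : E3, (radial x)^2 * ρ x) + (∫ x : E3, (ρ x)^2)
      ≤ TFtot V 1 ω ρ := by
  have h2' : Integrable (fun x => Ω^2/4 * ((radial x)^2 * ρ x)) :=
    h.2.2.2.1.const_mul _
  have key : -C ≤ (∫ x : E3, V x * ρ x) - Ω^2/4 * (∫ x : E3, (radial x)^2 * ρ x) := by
    have hmono : ∫ x : E3, (-C) * ρ x
        ≤ ∫ x : E3, (V x * ρ x - Ω^2/4 * ((radial x)^2 * ρ x)) := by
      apply integral_mono (h.integrable.const_mul _) (h.2.2.1.sub h2')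
      intro x
      have := hC x
      have hρ := h.1 x
      simp only [Pi.sub_apply]
      nlinarith
    rw [integral_const_mul, h.2.2.2.2, mul_one] at hmono
    rw [integral_sub h.2.2.1 h2', integral_const_mul] at hmono
    exact hmono
  rw [TF_split V ω h]
  have hR := h.Rnonneg
  nlinarith

lemma ESet_nonempty (V : E3 → ℝ) (hV_cont : Continuous V) (ω : ℝ) :
    {e : ℝ | ∃ ρ : E3 → ℝ, TFadm V ρ ∧ TFtot V 1 ω ρ = e}.Nonempty :=
  ⟨TFtot V 1 ω rho0, rho0, adm_rho0 V hV_cont, rfl⟩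

lemma ESet_bddBelow (V : E3 → ℝ) (hV_cont : Continuous V) (hV_trap : IsTrapping V)
    {ω : ℝ} (hω : 0 ≤ ω) :
    BddBelow {e : ℝ | ∃ ρ : E3 → ℝ, TFadm V ρ ∧ TFtot V 1 ω ρ = e} := by
  obtain ⟨C, hC0, hC⟩ := trap_bound V hV_cont hω hV_trap
  refine ⟨-C, fun e he => ?_⟩
  obtain ⟨ρ, hadm, heq⟩ := he
  have := TF_lower V hadm (le_refl (ω^2)) hC
  have hR := hadm.Rnonneg
  have hQ := hadm.Qnonneg
  linarith [heq ▸ this]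

lemma energy_le (V : E3 → ℝ) (hV_cont : Continuous V) (hV_trap : IsTrapping V)
    {ω : ℝ} (hω : 0 ≤ ω) {ρ : E3 → ℝ} (h : TFadm V ρ) :
    TFenergy V 1 ω ≤ TFtot V 1 ω ρ :=
  csInf_le (ESet_bddBelow V hV_cont hV_trap hω) ⟨ρ, h, rfl⟩

/-- monotonicity in ω -/
lemma energy_mono (V : E3 → ℝ) (hV_cont : Continuous V) (hV_trap : IsTrapping V)
    {ω₁ ω₂ : ℝ} (h1 : 0 ≤ ω₁) (h12 : ω₁ ≤ ω₂) :
    TFenergy V 1 ω₂ ≤ TFenergy V 1 ω₁ := by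
  apply le_csInf (ESet_nonempty V hV_cont ω₁)
  rintro e ⟨ρ, hadm, rfl⟩
  have hle : TFtot V 1 ω₂ ρ ≤ TFtot V 1 ω₁ ρ := by
    rw [TF_split V ω₁ hadm, TF_split V ω₂ hadm]
    have hR := hadm.Rnonneg
    have hsq : ω₁^2 ≤ ω₂^2 := by nlinarith
    nlinarith [mul_le_mul_of_nonneg_right hsq hR]
  exact (energy_le V hV_cont hV_trap (le_trans h1 h12) hadm).trans hle

/-! ### Positivity of the energy at ω = 0 -/

lemma V_lower_bound (V : E3 → ℝ) {s : ℝ} (hs : 2 < s) (hV_hom : HomogeneousOfDegree V s)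
    (hV_trap : IsTrapping V) (hV_cont : Continuous V) :
    ∃ m : ℝ, 0 < m ∧ ∀ x : E3, 1 ≤ ‖x‖ → m ≤ V x := by
  have htrap' : Tendsto V (cocompact E3) atTop := by
    have := hV_trap 0 le_rfl
    simpa using this
  have hpos : ∀ u : E3, ‖u‖ = 1 → 0 < V u := by
    intro u hu
    by_contra hle
    push_neg at hle
    have h1 : ∀ᶠ x in cocompact E3, (1:ℝ) ≤ V x := htrap'.eventually_ge_atTop 1
    rw [Filter.Eventually, mem_cocompact] at h1
    obtain ⟨K, hK, hKs⟩ := h1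
    obtain ⟨R, hR⟩ := hK.isBounded.subset_ball 0
    have hnot : (max R 0 + 1) • u ∉ K := by
      intro hmem
      have h2 := hR hmem
      rw [Metric.mem_ball, dist_zero_right] at h2
      rw [norm_smul, hu, mul_one, Real.norm_eq_abs, abs_of_pos (by positivity)] at h2
      linarith [le_max_left R 0]
    have h3 := hKs hnot
    simp only [Set.mem_setOf_eq] at h3
    have hV0 : V ((max R 0 + 1) • u) = (max R 0 + 1) ^ s * V u :=
      hV_hom _ (by positivity) u
    nlinarith [Real.rpow_nonneg (show (0:ℝ) ≤ max R 0 + 1 by positivity) s]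
  have hsph : IsCompact (Metric.sphere (0:E3) 1) := isCompact_sphere 0 1
  have hne : (Metric.sphere (0:E3) 1).Nonempty :=
    ⟨EuclideanSpace.single 0 1, by simp [EuclideanSpace.norm_single]⟩
  obtain ⟨u0, hu0, hmin⟩ := hsph.exists_isMinOn hne hV_cont.continuousOn
  refine ⟨V u0, hpos u0 (by simpa using hu0), fun x hx => ?_⟩
  have hnorm : 0 < ‖x‖ := by linarith
  set u := ‖x‖⁻¹ • x with hu
  have hun : ‖u‖ = 1 := by
    rw [hu, norm_smul]
    simp [abs_of_pos (inv_pos.mpr hnorm)]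
    field_simp
  have hxu : x = ‖x‖ • u := by rw [hu, smul_smul]; field_simp; rw [one_smul]
  have hVx : V x = ‖x‖ ^ s * V u := by conv_lhs => rw [hxu, hV_hom _ hnorm u]
  rw [hVx]
  have h1 : 1 ≤ ‖x‖ ^ s := Real.one_le_rpow hx (by linarith)
  have h2 : V u0 ≤ V u := hmin (by simpa using hun)
  nlinarith [hpos u hun]

lemma ind1_integrable : Integrable (fun x : E3 => B1.indicator (fun _ => (1:ℝ)) x) := by
  rw [integrable_indicator_iff B1_meas]
  exact (integrableOn_const_iff).mpr (Or.inr measure_closedBall_lt_top)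

lemma ind1_integral : (∫ x : E3, B1.indicator (fun _ => (1:ℝ)) x) = vB := by
  rw [integral_indicator B1_meas, setIntegral_const, smul_eq_mul, mul_one]; rfl

lemma energy0_pos (V : E3 → ℝ) {s : ℝ} (hs : 2 < s) (hV_hom : HomogeneousOfDegree V s)
    (hV_trap : IsTrapping V) (hV_cont : Continuous V) (hV_nonneg : ∀ x, 0 ≤ V x) :
    0 < TFenergy V 1 0 := by
  obtain ⟨m, hm, hmV⟩ := V_lower_bound V hs hV_hom hV_trap hV_cont
  have hvB : 0 < vB := vB_pos
  set t : ℝ := (2 * vB)⁻¹ with ht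
  have htpos : 0 < t := by rw [ht]; positivity
  set K : ℝ := max t⁻¹ m⁻¹ with hK
  have hKpos : 0 < K := lt_max_of_lt_left (inv_pos.mpr htpos)
  have hc : 0 < (2*K)⁻¹ := by positivity
  refine lt_of_lt_of_le hc (le_csInf (ESet_nonempty V hV_cont 0) ?_)
  rintro e ⟨ρ, hadm, rfl⟩
  set A := ∫ x : E3, V x * ρ x with hA
  set Q := ∫ x : E3, (ρ x)^2 with hQ
  have hA0 : 0 ≤ A := integral_nonneg fun x => mul_nonneg (hV_nonneg x) (hadm.1 x)
  have hQ0 : 0 ≤ Q := hadm.Qnonneg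
  -- pointwise bound
  have hpt : ∀ x : E3, ρ x ≤ t⁻¹ * (ρ x)^2 + t * B1.indicator (fun _ => (1:ℝ)) x
      + m⁻¹ * (V x * ρ x) := by
    intro x
    have hρ := hadm.1 x
    have hVρ : 0 ≤ m⁻¹ * (V x * ρ x) := by
      have := hV_nonneg x
      positivity
    by_cases hx : x ∈ B1
    · rw [Set.indicator_of_mem hx]
      by_cases hcase : ρ x ≤ t
      · nlinarith [sq_nonneg (ρ x), inv_pos.mpr htpos]
      · push_neg at hcase
        have h2 : t * ρ x ≤ (ρ x)^2 := by nlinarith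
        have h3 : ρ x ≤ t⁻¹ * (ρ x)^2 := by
          calc ρ x = t⁻¹ * (t * ρ x) := by field_simp
            _ ≤ t⁻¹ * (ρ x)^2 := by
                apply mul_le_mul_of_nonneg_left h2 (inv_pos.mpr htpos).le
        nlinarith
    · rw [Set.indicator_of_notMem hx]
      have hx1 : 1 ≤ ‖x‖ := by
        simp only [B1, Metric.mem_closedBall, dist_zero_right, not_le] at hx
        linarith
      have hVm : m ≤ V x := hmV x hx1
      have h4 : ρ x ≤ m⁻¹ * (V x * ρ x) := by
        calc ρ x = m⁻¹ * (m * ρ x) := by field_simp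
          _ ≤ m⁻¹ * (V x * ρ x) := by
              apply mul_le_mul_of_nonneg_left _ (inv_pos.mpr hm).le
              exact mul_le_mul_of_nonneg_right hVm hρ
      nlinarith [sq_nonneg (ρ x), inv_pos.mpr htpos]
  -- integrate the pointwise bound
  have hint : ∫ x : E3, ρ x ≤ ∫ x : E3, (t⁻¹ * (ρ x)^2 + t * B1.indicator (fun _ => (1:ℝ)) x
      + m⁻¹ * (V x * ρ x)) := by
    apply integral_mono hadm.integrable _ hpt
    exact ((hadm.integrable_sq'.const_mul _).add (ind1_integrable.const_mul _)).add
      (hadm.2.2.1.const_mul _)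
  rw [hadm.2.2.2.2] at hint
  have hi1 : Integrable (fun x => t⁻¹ * (ρ x)^2) := hadm.integrable_sq'.const_mul _
  have hi2 : Integrable (fun x => t * B1.indicator (fun _ => (1:ℝ)) x) :=
    ind1_integrable.const_mul _
  have hi3 : Integrable (fun x => m⁻¹ * (V x * ρ x)) := hadm.2.2.1.const_mul _
  have hi12 : Integrable (fun x => t⁻¹ * (ρ x)^2 + t * B1.indicator (fun _ => (1:ℝ)) x) :=
    hi1.add hi2
  rw [integral_add hi12 hi3, integral_add hi1 hi2,
    integral_const_mul, integral_const_mul, integral_const_mul, ind1_integral] at hint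
  have htvB : t * vB = 1/2 := by rw [ht]; field_simp
  rw [htvB] at hint
  -- conclude
  have h5 : t⁻¹ * Q + m⁻¹ * A ≤ K * Q + K * A := by
    have h6 : t⁻¹ ≤ K := le_max_left _ _
    have h7 : m⁻¹ ≤ K := le_max_right _ _
    nlinarith
  have h8 : 1/2 ≤ K * (Q + A) := by nlinarith
  have h9 : (2*K)⁻¹ ≤ Q + A := by
    rw [inv_le_iff_one_le_mul₀ (by positivity)]
    nlinarith
  have hsplit := TF_split V 0 hadm
  simp only [← hA, ← hQ] at hsplit
  rw [hsplit]
  have hz : (0:ℝ)^2/4 = 0 := by norm_num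
  rw [hz, zero_mul, sub_zero]
  linarith

/-! ### Divergence to -∞ and continuity -/

lemma energy_tendsto_atBot (V : E3 → ℝ) (hV_cont : Continuous V) (hV_trap : IsTrapping V) :
    Tendsto (fun ω : ℝ => TFenergy V 1 ω) atTop atBot := by
  set R0 := ∫ x : E3, (radial x)^2 * rho0 x with hR0
  have hR0pos : 0 < R0 := rsq_rho0_pos
  set T0 := (∫ x : E3, V x * rho0 x) + ∫ x : E3, (rho0 x)^2 with hT0
  have hbound : ∀ ω : ℝ, 0 ≤ ω → TFenergy V 1 ω ≤ T0 - ω^2 * (R0/4) := by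
    intro ω hω
    have h1 := energy_le V hV_cont hV_trap hω (adm_rho0 V hV_cont)
    rw [TF_split V ω (adm_rho0 V hV_cont)] at h1
    rw [hT0]
    calc TFenergy V 1 ω ≤ _ := h1
      _ = _ := by rw [← hR0]; ring
  have hg : Tendsto (fun ω : ℝ => T0 - ω^2 * (R0/4)) atTop atBot := by
    have h2 : Tendsto (fun ω : ℝ => ω^2) atTop atTop := tendsto_pow_atTop two_ne_zero
    have h3 : Tendsto (fun ω : ℝ => ω^2 * (R0/4)) atTop atTop :=
      h2.atTop_mul_const (by positivity)
    exact tendsto_atBot_add_const_left _ T0 (tendsto_neg_atTop_atBot.comp h3)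
  apply tendsto_atBot_mono' atTop _ hg
  filter_upwards [eventually_ge_atTop (0:ℝ)] with ω hω
  exact hbound ω hω

/-- local Lipschitz-type bound in ω² -/
lemma energy_slope (V : E3 → ℝ) (hV_cont : Continuous V) (hV_trap : IsTrapping V)
    {A : ℝ} (hA : 0 ≤ A) :
    ∃ M : ℝ, 0 ≤ M ∧ ∀ ω ∈ Set.Icc 0 A, ∀ ω' ∈ Set.Icc (0:ℝ) A,
      TFenergy V 1 ω' ≤ TFenergy V 1 ω + M * |ω'^2 - ω^2| := by
  obtain ⟨C, hC0, hC⟩ := trap_bound V hV_cont (show (0:ℝ) ≤ A + 1 by linarith) hV_trap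
  set E0 := TFenergy V 1 0 with hE0
  refine ⟨max (E0 + 1 + C) 0, le_max_right _ _, ?_⟩
  set M := max (E0 + 1 + C) 0 with hM
  have hM0 : 0 ≤ M := le_max_right _ _
  rintro ω ⟨hω0, hωA⟩ ω' ⟨hω'0, hω'A⟩
  apply le_of_forall_pos_le_add
  intro ε hε
  set ε' := min ε 1 with hε'
  have hε'pos : 0 < ε' := lt_min hε one_pos
  have hε'le : ε' ≤ 1 := min_le_right _ _
  -- pick a near-minimizer at ω
  have hlt : sInf {e : ℝ | ∃ ρ : E3 → ℝ, TFadm V ρ ∧ TFtot V 1 ω ρ = e}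
      < TFenergy V 1 ω + ε' := by
    have : TFenergy V 1 ω = sInf {e : ℝ | ∃ ρ : E3 → ℝ, TFadm V ρ ∧ TFtot V 1 ω ρ = e} := rfl
    linarith
  obtain ⟨e, ⟨ρ, hadm, rfl⟩, helt⟩ := exists_lt_of_csInf_lt (ESet_nonempty V hV_cont ω) hlt
  -- bound the radial moment of ρ
  set R := ∫ x : E3, (radial x)^2 * ρ x with hR
  have hRnn : 0 ≤ R := hadm.Rnonneg
  have hQnn : 0 ≤ ∫ x : E3, (ρ x)^2 := hadm.Qnonneg
  have hωΩ : ω^2 ≤ (A+1)^2 := by nlinarith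
  have hlow := TF_lower V hadm hωΩ hC
  rw [← hR] at hlow
  have hEωE0 : TFenergy V 1 ω ≤ E0 := energy_mono V hV_cont hV_trap le_rfl hω0
  have hgap : ((A+1)^2 - ω^2)/4 ≥ 1/4 := by nlinarith
  have hRM : R ≤ 4 * M := by
    have h1 : -C + ((A+1)^2 - ω^2)/4 * R ≤ TFtot V 1 ω ρ := by linarith
    have h2 : TFtot V 1 ω ρ ≤ E0 + 1 := by linarith
    have h3 : ((A+1)^2 - ω^2)/4 * R ≤ E0 + 1 + C := by linarith
    have h4 : (1/4) * R ≤ E0 + 1 + C := by nlinarith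
    have h5 : E0 + 1 + C ≤ M := le_max_left _ _
    linarith
  -- compare the energies
  have hE' : TFenergy V 1 ω' ≤ TFtot V 1 ω' ρ := energy_le V hV_cont hV_trap hω'0 hadm
  have hsplit : TFtot V 1 ω' ρ = TFtot V 1 ω ρ + (ω^2 - ω'^2)/4 * R := by
    rw [TF_split V ω hadm, TF_split V ω' hadm, ← hR]; ring
  have habs : (ω^2 - ω'^2)/4 * R ≤ M * |ω'^2 - ω^2| := by
    have h6 : ω^2 - ω'^2 ≤ |ω'^2 - ω^2| := by
      rw [abs_sub_comm]; exact le_abs_self _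
    have h7 : (ω^2 - ω'^2)/4 * R ≤ |ω'^2 - ω^2|/4 * R := by
      apply mul_le_mul_of_nonneg_right _ hRnn
      linarith
    have h8 : |ω'^2 - ω^2|/4 * R ≤ |ω'^2 - ω^2|/4 * (4*M) := by
      apply mul_le_mul_of_nonneg_left hRM (by positivity)
    calc (ω^2 - ω'^2)/4 * R ≤ |ω'^2 - ω^2|/4 * (4*M) := by linarith
      _ = M * |ω'^2 - ω^2| := by ring
  have : TFenergy V 1 ω' ≤ TFenergy V 1 ω + ε' + M * |ω'^2 - ω^2| := by
    calc TFenergy V 1 ω' ≤ TFtot V 1 ω' ρ := hE'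
      _ = TFtot V 1 ω ρ + (ω^2 - ω'^2)/4 * R := hsplit
      _ ≤ TFenergy V 1 ω + ε' + M * |ω'^2 - ω^2| := by linarith
  linarith [min_le_left ε 1]

lemma energy_contOn (V : E3 → ℝ) (hV_cont : Continuous V) (hV_trap : IsTrapping V)
    {A : ℝ} (hA : 0 ≤ A) :
    ContinuousOn (fun ω : ℝ => TFenergy V 1 ω) (Set.Icc 0 A) := by
  obtain ⟨M, hM0, hM⟩ := energy_slope V hV_cont hV_trap hA
  intro a ha
  have hub : ∀ ω ∈ Set.Icc (0:ℝ) A,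
      TFenergy V 1 ω ≤ TFenergy V 1 a + M * |ω^2 - a^2| := fun ω hω => hM a ha ω hω
  have hlb : ∀ ω ∈ Set.Icc (0:ℝ) A,
      TFenergy V 1 a - M * |ω^2 - a^2| ≤ TFenergy V 1 ω := by
    intro ω hω
    have := hM ω hω a ha
    rw [abs_sub_comm] at this
    linarith
  have hgcont : Continuous (fun ω : ℝ => M * |ω^2 - a^2|) :=
    continuous_const.mul (((continuous_pow 2).sub continuous_const).abs)
  have hg0 : Tendsto (fun ω : ℝ => M * |ω^2 - a^2|) (nhdsWithin a (Set.Icc 0 A)) (nhds 0) := by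
    have := (hgcont.tendsto a).mono_left (nhdsWithin_le_nhds (s := Set.Icc (0:ℝ) A))
    simpa using this
  have hup : Tendsto (fun ω : ℝ => TFenergy V 1 a + M * |ω^2 - a^2|)
      (nhdsWithin a (Set.Icc 0 A)) (nhds (TFenergy V 1 a)) := by
    have := tendsto_const_nhds (x := TFenergy V 1 a)
      (f := nhdsWithin a (Set.Icc (0:ℝ) A)) |>.add hg0
    simpa using this
  have hdn : Tendsto (fun ω : ℝ => TFenergy V 1 a - M * |ω^2 - a^2|)
      (nhdsWithin a (Set.Icc 0 A)) (nhds (TFenergy V 1 a)) := by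
    have := tendsto_const_nhds (x := TFenergy V 1 a)
      (f := nhdsWithin a (Set.Icc (0:ℝ) A)) |>.sub hg0
    simpa using this
  have := tendsto_of_tendsto_of_tendsto_of_le_of_le' hdn hup
    (by filter_upwards [self_mem_nhdsWithin] with ω hω using hlb ω hω)
    (by filter_upwards [self_mem_nhdsWithin] with ω hω using hub ω hω)
  exact this

/-- (Properties of `ω ↦ E^TF_{1,ω}`, see Section 2): the map `ω ↦ E^TF_{1,ω}` is
decreasing on `[0,∞)`, `E^TF_{1,0} > 0`, its range is `(-∞, E^TF_{1,0}]`
(in particular it tends to `-∞` as `ω → ∞`), and there is `ω* > 0` with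
`E^TF_{1,ω*} = 0`. -/
theorem tf_energy_monotone_in_omega
    (V : E3 → ℝ) (s : ℝ)
    (hV_cont : Continuous V) (hV_nonneg : ∀ x, 0 ≤ V x)
    (hs : 2 < s) (hV_hom : HomogeneousOfDegree V s) (hV_trap : IsTrapping V) :
    (∀ ω₁ ω₂ : ℝ, 0 ≤ ω₁ → ω₁ ≤ ω₂ → TFenergy V 1 ω₂ ≤ TFenergy V 1 ω₁) ∧
    0 < TFenergy V 1 0 ∧
    (∀ e : ℝ, e ≤ TFenergy V 1 0 → ∃ ω : ℝ, 0 ≤ ω ∧ TFenergy V 1 ω = e) ∧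
    Tendsto (fun ω : ℝ => TFenergy V 1 ω) atTop atBot ∧
    (∃ ωstar : ℝ, 0 < ωstar ∧ TFenergy V 1 ωstar = 0) := by
  have hpos : 0 < TFenergy V 1 0 := energy0_pos V hs hV_hom hV_trap hV_cont hV_nonneg
  have htb : Tendsto (fun ω : ℝ => TFenergy V 1 ω) atTop atBot :=
    energy_tendsto_atBot V hV_cont hV_trap
  have hrange : ∀ e : ℝ, e ≤ TFenergy V 1 0 → ∃ ω : ℝ, 0 ≤ ω ∧ TFenergy V 1 ω = e := by
    intro e he
    obtain ⟨W₀, hW₀⟩ := (htb.eventually (eventually_le_atBot e)).exists_forall_of_atTop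
    set W := max W₀ 0 with hW
    have hW0 : (0:ℝ) ≤ W := le_max_right _ _
    have hEW : TFenergy V 1 W ≤ e := hW₀ W (le_max_left _ _)
    have hsub := intermediate_value_Icc' hW0 (energy_contOn V hV_cont hV_trap hW0)
    obtain ⟨ω, hωmem, hωe⟩ := hsub ⟨hEW, he⟩
    exact ⟨ω, hωmem.1, hωe⟩
  refine ⟨fun ω₁ ω₂ h1 h12 => energy_mono V hV_cont hV_trap h1 h12, hpos, hrange, htb, ?_⟩
  obtain ⟨ω, hω0, hωe⟩ := hrange 0 hpos.le
  have hωne : ω ≠ 0 := by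
    intro h
    rw [h] at hωe
    linarith
  exact ⟨ω, lt_of_le_of_ne hω0 (Ne.symm hωne), hωe⟩
end
end
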